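/- Set f1 := x, f2 := y+w²−t, f3 := z. For each i ∈ {1,2,3}, if αi = 0 then fi is an invariant divisor of the C3^(1) system: the total derivative of fi along the Hamiltonian vector field, namely ∂fi/∂t + (∂H/∂y)(∂fi/∂x) − (∂H/∂x)(∂fi/∂y) + (∂H/∂w)(∂fi/∂z) − (∂H/∂z)(∂fi/∂w), is divisible by fi in the polynomial ring ℂ(t)[x,y,z,w]. -/

import Mathlib

/- STATEMENT 7: invariant divisors of the C3^(1) system.  For each i ∈ {1,2,3},
if αi = 0 then the total derivative of fi along the Hamiltonian vector field is
divisible by fi.  Divisibility in ℂ(t)[x,y,z,w] is formalized as the existence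
of a cofactor g with D fi = fi * g pointwise for all t ≠ 0 and all x,y,z,w. -/

open Complex

noncomputable def HC3 (a0 a1 a2 a3 : ℂ) (t x y z w : ℂ) : ℂ :=
  (x^2*y^3 - (t*x + 2*a1 + a2 + a3)*x*y^2 - ((a0*t - 1)*x - a1*(a1+a2+a3))*y - t*x
    - z^2*w^4/4 + (a3/2)*z*w^3 + (1/4)*(2*t*z^2 - a3^2)*w^2
    - (1/2)*((a3+1)*t - 1)*z*w - t^2*z^2/4
    + (x*y - a1)*y*z*w) / t^2

noncomputable def pdX (H : ℂ → ℂ → ℂ → ℂ → ℂ → ℂ) (t x y z w : ℂ) : ℂ :=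
  deriv (fun s => H t s y z w) x

noncomputable def pdY (H : ℂ → ℂ → ℂ → ℂ → ℂ → ℂ) (t x y z w : ℂ) : ℂ :=
  deriv (fun s => H t x s z w) y

noncomputable def pdZ (H : ℂ → ℂ → ℂ → ℂ → ℂ → ℂ) (t x y z w : ℂ) : ℂ :=
  deriv (fun s => H t x y s w) z

noncomputable def pdW (H : ℂ → ℂ → ℂ → ℂ → ℂ → ℂ) (t x y z w : ℂ) : ℂ :=
  deriv (fun s => H t x y z s) w

noncomputable def pdT (f : ℂ → ℂ → ℂ → ℂ → ℂ → ℂ) (t x y z w : ℂ) : ℂ :=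
  deriv (fun s => f s x y z w) t

/-- Total derivative of `f` along the Hamiltonian vector field of `H`:
`∂f/∂t + (∂H/∂y)(∂f/∂x) − (∂H/∂x)(∂f/∂y) + (∂H/∂w)(∂f/∂z) − (∂H/∂z)(∂f/∂w)`. -/
noncomputable def totalDeriv (H f : ℂ → ℂ → ℂ → ℂ → ℂ → ℂ) (t x y z w : ℂ) : ℂ :=
  pdT f t x y z w
  + pdY H t x y z w * pdX f t x y z w
  - pdX H t x y z w * pdY f t x y z w
  + pdW H t x y z w * pdZ f t x y z w
  - pdZ H t x y z w * pdW f t x y z w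


lemma deriv_p4 (c0 c1 c2 c3 c4 : ℂ) (f : ℂ → ℂ) (y : ℂ)
    (hf : f = fun s => c0 + c1*s + c2*s^2 + c3*s^3 + c4*s^4) :
    deriv f y = c1 + 2*c2*y + 3*c3*y^2 + 4*c4*y^3 := by
  subst hf
  have h := ((((hasDerivAt_const y c0).add ((hasDerivAt_id' y).const_mul c1)).add
      ((hasDerivAt_pow 2 y).const_mul c2)).add
      ((hasDerivAt_pow 3 y).const_mul c3)).add
      ((hasDerivAt_pow 4 y).const_mul c4)
  rw [show deriv (fun s => c0 + c1*s + c2*s^2 + c3*s^3 + c4*s^4) y = _ from h.deriv]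
  push_cast
  ring

lemma dH_x (a0 a1 a2 a3 t x y z w : ℂ) :
    deriv (fun s => HC3 a0 a1 a2 a3 t s y z w) x =
      (-(2*a1+a2+a3)*y^2 - (a0*t-1)*y - t + y^2*z*w)/t^2
      + 2*((y^3 - t*y^2)/t^2)*x + 3*0*x^2 + 4*0*x^3 :=
  deriv_p4 (HC3 a0 a1 a2 a3 t 0 y z w) _ _ 0 0 _ x (by funext s; simp only [HC3]; ring)

lemma dH_y (a0 a1 a2 a3 t x y z w : ℂ) :
    deriv (fun s => HC3 a0 a1 a2 a3 t x s z w) y =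
      (-((a0*t-1)*x - a1*(a1+a2+a3)) - a1*z*w)/t^2
      + 2*((-(t*x+2*a1+a2+a3)*x + x*z*w)/t^2)*y
      + 3*(x^2/t^2)*y^2 + 4*0*y^3 :=
  deriv_p4 (HC3 a0 a1 a2 a3 t x 0 z w) _ _ _ 0 _ y (by funext s; simp only [HC3]; ring)

lemma dH_z (a0 a1 a2 a3 t x y z w : ℂ) :
    deriv (fun s => HC3 a0 a1 a2 a3 t x y s w) z =
      ((a3/2)*w^3 - ((a3+1)*t-1)*w/2 + (x*y-a1)*y*w)/t^2
      + 2*((-w^4/4 + t*w^2/2 - t^2/4)/t^2)*z + 3*0*z^2 + 4*0*z^3 :=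
  deriv_p4 (HC3 a0 a1 a2 a3 t x y 0 w) _ _ 0 0 _ z (by funext s; simp only [HC3]; ring)

lemma dH_w (a0 a1 a2 a3 t x y z w : ℂ) :
    deriv (fun s => HC3 a0 a1 a2 a3 t x y z s) w =
      (-((a3+1)*t-1)*z/2 + (x*y-a1)*y*z)/t^2
      + 2*(((2*t*z^2-a3^2)/4)/t^2)*w
      + 3*((a3*z/2)/t^2)*w^2 + 4*((-z^2/4)/t^2)*w^3 :=
  deriv_p4 (HC3 a0 a1 a2 a3 t x y z 0) _ _ _ _ _ w (by funext s; simp only [HC3]; ring)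

set_option maxHeartbeats 1000000 in
theorem invariant_divisors_C3 (a0 a1 a2 a3 : ℂ)
    (hrel : a0 + 2*a1 + 2*a2 + a3 = 1) :
    -- f1 = x
    (a1 = 0 → ∃ g : ℂ → ℂ → ℂ → ℂ → ℂ → ℂ, ∀ t x y z w : ℂ, t ≠ 0 →
      totalDeriv (HC3 a0 a1 a2 a3) (fun _ x _ _ _ => x) t x y z w
        = x * g t x y z w) ∧
    -- f2 = y + w² - t
    (a2 = 0 → ∃ g : ℂ → ℂ → ℂ → ℂ → ℂ → ℂ, ∀ t x y z w : ℂ, t ≠ 0 →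
      totalDeriv (HC3 a0 a1 a2 a3) (fun t _ y _ w => y + w^2 - t) t x y z w
        = (y + w^2 - t) * g t x y z w) ∧
    -- f3 = z
    (a3 = 0 → ∃ g : ℂ → ℂ → ℂ → ℂ → ℂ → ℂ, ∀ t x y z w : ℂ, t ≠ 0 →
      totalDeriv (HC3 a0 a1 a2 a3) (fun _ _ _ z _ => z) t x y z w
        = z * g t x y z w) := by
  have ha0 : a0 = 1 - 2*a1 - 2*a2 - a3 := by linear_combination hrel
  subst ha0
  refine ⟨?_, ?_, ?_⟩
  · intro ha1; subst ha1
    refine ⟨fun t x y z w => (3*x*y^2 - 2*(t*x+a2+a3)*y - ((1-2*a2-a3)*t-1) + 2*y*z*w)/t^2, ?_⟩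
    intro t x y z w ht
    simp only [totalDeriv, pdT, pdX, pdY, pdZ, pdW, deriv_const', deriv_id'', dH_y]
    ring
  · intro ha2; subst ha2
    refine ⟨fun t x y z w => (-2*x*y^2 + (2*a1+a3-z*w)*y + ((1-2*a1-a3)*t-1) + 2*a1*w^2
      + (t-w^2)*(2*a1+a3-z*w))/t^2, ?_⟩
    intro t x y z w ht
    have h1 : deriv (fun s => y + w^2 - s) t = -1 := by
      have := deriv_p4 (y+w^2) (-1) 0 0 0 (fun s => y + w^2 - s) t (by funext s; ring)
      rw [this]; ring
    have h2 : deriv (fun s => s + w^2 - t) y = 1 := by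
      have := deriv_p4 (w^2-t) 1 0 0 0 (fun s => s + w^2 - t) y (by funext s; ring)
      rw [this]; ring
    have h3 : deriv (fun s => y + s^2 - t) w = 2*w := by
      have := deriv_p4 (y-t) 0 1 0 0 (fun s => y + s^2 - t) w (by funext s; ring)
      rw [this]; ring
    simp only [totalDeriv, pdT, pdX, pdY, pdZ, pdW, deriv_const', dH_x, dH_z, h1, h2, h3]
    have h6 : (t^2) * (t^2)⁻¹ = 1 := mul_inv_cancel₀ (pow_ne_zero 2 ht)
    linear_combination h6
  · intro ha3; subst ha3
    refine ⟨fun t x y z w => (-z*w^3 + t*z*w - (t-1)/2 + (x*y-a1)*y)/t^2, ?_⟩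
    intro t x y z w ht
    simp only [totalDeriv, pdT, pdX, pdY, pdZ, pdW, deriv_const', deriv_id'']
    rw [dH_w]
    ring
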